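/- Let n ≥ 1 and θ ≥ 1/2. Then there exist t₀ > 0 and a constant C > 0 depending only on n and θ such that for all t ≥ t₀: C t^{−n/(2θ)} ≤ ∫_{ℝⁿ} e^{−t log(1+|ξ|^{2θ})} · cos²(|ξ|t) dξ ≤ C^{−1} t^{−n/(2θ)}. -/

import Mathlib

open MeasureTheory Set

private lemma contOn_aux (n : ℕ) (p t : ℝ) :
    ContinuousOn (fun y : ℝ =>
      y ^ (n - 1) * (Real.exp (-t * Real.log (1 + y ^ p)) * Real.cos (y * t) ^ 2)) (Ioi 0) := by
  have h1 : ContinuousOn (fun y : ℝ => y ^ p) (Ioi 0) := fun y hy =>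
    (Real.continuousAt_rpow_const y p (Or.inl (ne_of_gt hy))).continuousWithinAt
  have h2 : ContinuousOn (fun y : ℝ => Real.log (1 + y ^ p)) (Ioi 0) :=
    (continuousOn_const.add h1).log (fun y hy => by
      have h : (0:ℝ) ≤ y ^ p := Real.rpow_nonneg (le_of_lt hy) p
      exact (by linarith : (0:ℝ) < 1 + y ^ p).ne')
  exact (continuous_pow (n-1)).continuousOn.mul
    ((Real.continuous_exp.comp_continuousOn (continuousOn_const.mul h2)).mul
      (((Real.continuous_cos.comp (continuous_id.mul continuous_const)).pow 2).continuousOn))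

private lemma nonneg_aux (n : ℕ) (p t : ℝ) {y : ℝ} (hy : 0 ≤ y) :
    0 ≤ y ^ (n - 1) * (Real.exp (-t * Real.log (1 + y ^ p)) * Real.cos (y * t) ^ 2) :=
  mul_nonneg (pow_nonneg hy _) (mul_nonneg (Real.exp_nonneg _) (sq_nonneg _))

private lemma integrableOn_aux (n : ℕ) (hn : 1 ≤ n) (p : ℝ) (hp : 1 ≤ p) (t : ℝ)
    (ht : (n:ℝ) + 1 ≤ t) :
    IntegrableOn (fun y : ℝ => y ^ (n - 1) *
      (Real.exp (-t * Real.log (1 + y ^ p)) * Real.cos (y * t) ^ 2)) (Ioi 0) := by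
  have hn1 : (1:ℝ) ≤ (n:ℝ) := Nat.one_le_cast.mpr hn
  have ht0 : 0 < t := by linarith
  have hp0 : 0 < p := lt_of_lt_of_le one_pos hp
  rw [← Ioc_union_Ioi_eq_Ioi (zero_le_one : (0:ℝ) ≤ 1)]
  refine IntegrableOn.union ?_ ?_
  · refine Integrable.mono' (g := fun _ : ℝ => (1:ℝ))
      (integrableOn_const measure_Ioc_lt_top.ne)
      (((contOn_aux n p t).mono Ioc_subset_Ioi_self).aestronglyMeasurable measurableSet_Ioc) ?_
    rw [ae_restrict_iff' measurableSet_Ioc]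
    refine Filter.Eventually.of_forall fun y hy => ?_
    have hy0 : 0 < y := hy.1
    have hb1 : y ^ (n-1) ≤ 1 := pow_le_one₀ hy0.le hy.2
    have hb2 : Real.exp (-t * Real.log (1 + y ^ p)) ≤ 1 := by
      rw [Real.exp_le_one_iff]
      have hl : 0 ≤ Real.log (1 + y ^ p) := Real.log_nonneg (by
        have h : (0:ℝ) ≤ y ^ p := Real.rpow_nonneg hy0.le p
        linarith)
      nlinarith
    have hb3 : Real.cos (y * t) ^ 2 ≤ 1 := Real.cos_sq_le_one _
    show ‖y ^ (n - 1) * (Real.exp (-t * Real.log (1 + y ^ p)) * Real.cos (y * t) ^ 2)‖ ≤ 1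
    rw [Real.norm_eq_abs, abs_of_nonneg (nonneg_aux n p t hy0.le)]
    have h0 : (0:ℝ) ≤ y ^ (n-1) := pow_nonneg hy0.le _
    have h0' : (0:ℝ) ≤ Real.exp (-t * Real.log (1 + y ^ p)) := Real.exp_nonneg _
    have h0'' : (0:ℝ) ≤ Real.cos (y * t) ^ 2 := sq_nonneg _
    exact mul_le_one₀ hb1 (mul_nonneg h0' h0'') (mul_le_one₀ hb2 h0'' hb3)
  · have he : (n:ℝ) - 1 - p * t < -1 := by nlinarith
    refine Integrable.mono' (integrableOn_Ioi_rpow_of_lt he one_pos)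
      (((contOn_aux n p t).mono (Ioi_subset_Ioi zero_le_one)).aestronglyMeasurable
        measurableSet_Ioi) ?_
    rw [ae_restrict_iff' measurableSet_Ioi]
    refine Filter.Eventually.of_forall fun y hy => ?_
    have hy1 : (1:ℝ) < y := hy
    have hy0 : (0:ℝ) < y := lt_trans one_pos hy1
    show ‖y ^ (n - 1) * (Real.exp (-t * Real.log (1 + y ^ p)) * Real.cos (y * t) ^ 2)‖ ≤ y ^ ((n:ℝ) - 1 - p * t)
    rw [Real.norm_eq_abs, abs_of_nonneg (nonneg_aux n p t hy0.le)]
    have hb3 : Real.cos (y * t) ^ 2 ≤ 1 := Real.cos_sq_le_one _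
    have hpow : y ^ (n-1) = y ^ ((n:ℝ) - 1) := by
      rw [← Real.rpow_natCast y (n-1), Nat.cast_sub hn, Nat.cast_one]
    have hexp : Real.exp (-t * Real.log (1 + y ^ p)) ≤ y ^ (-(p*t)) := by
      have hyp0 : (0:ℝ) < y ^ p := Real.rpow_pos_of_pos hy0 p
      have hlog : p * Real.log y ≤ Real.log (1 + y ^ p) := by
        rw [← Real.log_rpow hy0]
        exact Real.log_le_log hyp0 (by linarith)
      conv_rhs => rw [Real.rpow_def_of_pos hy0]
      apply Real.exp_le_exp.mpr
      have hly : 0 ≤ Real.log y := Real.log_nonneg hy1.le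
      nlinarith
    calc y ^ (n-1) * (Real.exp (-t * Real.log (1 + y ^ p)) * Real.cos (y * t) ^ 2)
        ≤ y ^ ((n:ℝ)-1) * y ^ (-(p*t)) := by
          rw [← hpow]
          have h0 : (0:ℝ) ≤ y ^ (n-1) := pow_nonneg hy0.le _
          have h0' : (0:ℝ) ≤ Real.exp (-t * Real.log (1 + y ^ p)) := Real.exp_nonneg _
          have key : Real.exp (-t * Real.log (1 + y ^ p)) * Real.cos (y*t)^2 ≤ y ^ (-(p*t)) :=
            le_trans (mul_le_of_le_one_right h0' hb3) hexp
          exact mul_le_mul_of_nonneg_left key h0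
      _ = y ^ ((n:ℝ) - 1 - p * t) := by
          rw [← Real.rpow_add hy0]; ring_nf

private lemma cos_int_aux (a b t : ℝ) (ht : t ≠ 0) (hab : a ≤ b) :
    ∫ y in Ioc a b, Real.cos (y * t) ^ 2 =
      (b/2 + Real.sin (2*t*b)/(4*t)) - (a/2 + Real.sin (2*t*a)/(4*t)) := by
  rw [← intervalIntegral.integral_of_le hab]
  have hderiv : ∀ y ∈ uIcc a b,
      HasDerivAt (fun z => z/2 + Real.sin (2*t*z)/(4*t)) (Real.cos (y * t) ^ 2) y := by
    intro y _
    have h1 : HasDerivAt (fun z : ℝ => z/2) (1/2) y := (hasDerivAt_id y).div_const 2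
    have h2 : HasDerivAt (fun z : ℝ => Real.sin (2*t*z)) (Real.cos (2*t*y) * (2*t)) y := by
      have := (Real.hasDerivAt_sin (2*t*y)).comp y ((hasDerivAt_id y).const_mul (2*t))
      simpa [Function.comp_def] using this
    have := h1.add (h2.div_const (4*t))
    refine HasDerivAt.congr_deriv this ?_
    rw [Real.cos_sq]
    have h2y : 2*t*y = 2*(y*t) := by ring
    rw [h2y]
    field_simp
    ring
  rw [intervalIntegral.integral_eq_sub_of_hasDerivAt hderiv
    (((Real.continuous_cos.comp (continuous_id.mul continuous_const)).pow 2).intervalIntegrable _ _)]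

private lemma lower_aux (n : ℕ) (hn : 1 ≤ n) (p : ℝ) (hp : 1 ≤ p) (t : ℝ)
    (ht : (n:ℝ) + 1 ≤ t) :
    2^(n-1) * Real.exp (-(5:ℝ)^p) * t ^ (-(n:ℝ)/p) ≤
      ∫ y in Ioi (0:ℝ), y ^ (n-1) *
        (Real.exp (-t * Real.log (1 + y ^ p)) * Real.cos (y * t) ^ 2) := by
  have hn1 : (1:ℝ) ≤ (n:ℝ) := Nat.one_le_cast.mpr hn
  have ht1 : (1:ℝ) ≤ t := by linarith
  have ht0 : (0:ℝ) < t := by linarith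
  have hp0 : (0:ℝ) < p := lt_of_lt_of_le one_pos hp
  set L := t ^ (-1/p) with hL
  have hL0 : 0 < L := Real.rpow_pos_of_pos ht0 _
  have hLp : L ^ p = t⁻¹ := by
    rw [hL, ← Real.rpow_mul ht0.le]
    have h : -1/p * p = -1 := by field_simp
    rw [h, Real.rpow_neg_one]
  have hLt : 1 ≤ L * t := by
    have h := Real.rpow_le_rpow_of_exponent_le ht1
      (show (-1 : ℝ) ≤ -1/p by
        have h1 : 1/p ≤ 1 := by rw [div_le_one hp0]; exact hp
        rw [neg_div]
        linarith)
    rw [Real.rpow_neg_one] at h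
    calc (1:ℝ) = t⁻¹ * t := by field_simp
    _ ≤ L * t := by
      apply mul_le_mul_of_nonneg_right _ ht0.le
      exact h
  -- pointwise bound on Ioc (2L) (5L)
  have key : ∀ y ∈ Ioc (2*L) (5*L),
      (2*L)^(n-1) * Real.exp (-(5:ℝ)^p) * Real.cos (y*t)^2 ≤
        y ^ (n-1) * (Real.exp (-t * Real.log (1 + y^p)) * Real.cos (y*t)^2) := by
    intro y hy
    have hy0 : 0 < y := lt_trans (by positivity) hy.1
    have h1 : (2*L)^(n-1) ≤ y^(n-1) := pow_le_pow_left₀ (by positivity) hy.1.le _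
    have h2 : Real.exp (-(5:ℝ)^p) ≤ Real.exp (-t * Real.log (1 + y^p)) := by
      apply Real.exp_le_exp.mpr
      have hyp : y ^ p ≤ 5^p * t⁻¹ := by
        calc y ^ p ≤ (5*L)^p := Real.rpow_le_rpow hy0.le hy.2 hp0.le
        _ = 5^p * L^p := Real.mul_rpow (by norm_num) hL0.le
        _ = 5^p * t⁻¹ := by rw [hLp]
      have hyp0 : (0:ℝ) < y ^ p := Real.rpow_pos_of_pos hy0 p
      have hlog : Real.log (1 + y^p) ≤ y^p := by
        have h := Real.log_le_sub_one_of_pos (show (0:ℝ) < 1 + y^p by positivity)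
        linarith
      have hlog0 : 0 ≤ Real.log (1 + y^p) := Real.log_nonneg (by linarith)
      have hkey : t * Real.log (1 + y^p) ≤ 5^p := by
        calc t * Real.log (1+y^p) ≤ t * (5^p * t⁻¹) :=
          mul_le_mul_of_nonneg_left (hlog.trans hyp) ht0.le
        _ = 5^p := by field_simp
      linarith
    have h3 : (0:ℝ) ≤ Real.cos (y*t)^2 := sq_nonneg _
    calc (2*L)^(n-1) * Real.exp (-(5:ℝ)^p) * Real.cos (y*t)^2
        ≤ y^(n-1) * Real.exp (-t * Real.log (1 + y^p)) * Real.cos (y*t)^2 := by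
          apply mul_le_mul_of_nonneg_right _ h3
          exact mul_le_mul h1 h2 (Real.exp_nonneg _) (pow_nonneg hy0.le _)
      _ = _ := by ring
  -- integral of cos^2 on the window
  have hcos : L ≤ ∫ y in Ioc (2*L) (5*L), Real.cos (y*t)^2 := by
    rw [cos_int_aux _ _ _ ht0.ne' (by linarith : 2*L ≤ 5*L)]
    have h4t : (0:ℝ) < 4*t := by linarith
    have e1 : (-1:ℝ)/(4*t) ≤ Real.sin (2*t*(5*L))/(4*t) := by
      gcongr
      exact Real.neg_one_le_sin _
    have e2 : Real.sin (2*t*(2*L))/(4*t) ≤ 1/(4*t) := by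
      gcongr
      exact Real.sin_le_one _
    have e3 : (1:ℝ)/(4*t) ≤ L/4 := by
      rw [div_le_div_iff₀ h4t (by norm_num)]
      nlinarith
    have e4 : (-(L/4) : ℝ) ≤ Real.sin (2*t*(5*L))/(4*t) := by
      have : (-1:ℝ)/(4*t) = -(1/(4*t)) := by ring
      rw [this] at e1
      linarith
    linarith
  -- assemble
  have hsub : Ioc (2*L) (5*L) ⊆ Ioi (0:ℝ) := fun y hy => lt_trans (by positivity) hy.1
  have hint := integrableOn_aux n hn p hp t ht
  have hLn : L ^ n = t ^ (-(n:ℝ)/p) := by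
    rw [hL, ← Real.rpow_natCast (t ^ (-1/p)) n, ← Real.rpow_mul ht0.le]
    congr 1
    ring
  calc 2^(n-1) * Real.exp (-(5:ℝ)^p) * t ^ (-(n:ℝ)/p)
      = (2*L)^(n-1) * Real.exp (-(5:ℝ)^p) * L := by
        rw [← hLn, mul_pow]
        have h : L ^ n = L^(n-1) * L := by rw [← pow_succ, Nat.sub_add_cancel hn]
        rw [h]; ring
    _ ≤ (2*L)^(n-1) * Real.exp (-(5:ℝ)^p) * ∫ y in Ioc (2*L) (5*L), Real.cos (y*t)^2 :=
        mul_le_mul_of_nonneg_left hcos (by positivity)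
    _ = ∫ y in Ioc (2*L) (5*L), (2*L)^(n-1) * Real.exp (-(5:ℝ)^p) * Real.cos (y*t)^2 :=
        (MeasureTheory.integral_const_mul _ _).symm
    _ ≤ ∫ y in Ioc (2*L) (5*L), y ^ (n-1) *
          (Real.exp (-t * Real.log (1 + y^p)) * Real.cos (y*t)^2) := by
        apply setIntegral_mono_on _ (hint.mono_set hsub) measurableSet_Ioc key
        exact (Continuous.integrableOn_Ioc (by
          exact continuous_const.mul
            ((Real.continuous_cos.comp (continuous_id.mul continuous_const)).pow 2)))
    _ ≤ ∫ y in Ioi (0:ℝ), y ^ (n-1) *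
          (Real.exp (-t * Real.log (1 + y^p)) * Real.cos (y*t)^2) := by
        apply setIntegral_mono_set hint _ (HasSubset.Subset.eventuallyLE hsub)
        filter_upwards [ae_restrict_mem measurableSet_Ioi] with y hy
        exact nonneg_aux n p t (le_of_lt hy)

private lemma twopow_aux (n : ℕ) (p : ℝ) (hp : 1 ≤ p) (t : ℝ) (ht1 : 1 ≤ t) :
    (2:ℝ) ^ (-t) ≤ ((n.factorial : ℝ) * ((Real.log 2)⁻¹)^n) * t ^ (-(n:ℝ)/p) := by
  have ht0 : (0:ℝ) < t := by linarith
  have hp0 : (0:ℝ) < p := lt_of_lt_of_le one_pos hp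
  have hlog2 : 0 < Real.log 2 := Real.log_pos one_lt_two
  set M : ℝ := (n.factorial : ℝ) * ((Real.log 2)⁻¹)^n with hM
  have hfac : (0:ℝ) < (n.factorial : ℝ) := Nat.cast_pos.mpr n.factorial_pos
  have h2t : (2:ℝ) ^ (-t) = Real.exp (-(t * Real.log 2)) := by
    rw [Real.rpow_def_of_pos two_pos]
    ring_nf
  have h1 : (t * Real.log 2)^n ≤ (n.factorial : ℝ) * Real.exp (t * Real.log 2) := by
    have := Real.pow_div_factorial_le_exp (t * Real.log 2) (by positivity) n
    rw [div_le_iff₀ hfac] at this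
    linarith [this]
  have ht_n : t^n = (t*Real.log 2)^n * ((Real.log 2)⁻¹)^n := by
    rw [← mul_pow]
    congr 1
    field_simp
  have h2 : t^n * Real.exp (-(t*Real.log 2)) ≤ M := by
    have hstep : t^n ≤ ((n.factorial : ℝ) * Real.exp (t * Real.log 2)) * ((Real.log 2)⁻¹)^n := by
      rw [ht_n]
      exact mul_le_mul_of_nonneg_right h1 (by positivity)
    have hE : (0:ℝ) < Real.exp (-(t*Real.log 2)) := Real.exp_pos _
    calc t^n * Real.exp (-(t*Real.log 2))
        ≤ (((n.factorial : ℝ) * Real.exp (t * Real.log 2)) * ((Real.log 2)⁻¹)^n) *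
            Real.exp (-(t*Real.log 2)) := mul_le_mul_of_nonneg_right hstep hE.le
      _ = M * (Real.exp (t * Real.log 2) * Real.exp (-(t*Real.log 2))) := by ring
      _ = M := by rw [← Real.exp_add]; norm_num
  have h3 : t ^ ((n:ℝ)/p) * (2:ℝ)^(-t) ≤ M := by
    have ha : t ^ ((n:ℝ)/p) ≤ t^n := by
      have := Real.rpow_le_rpow_of_exponent_le ht1
        (div_le_self (Nat.cast_nonneg n) hp)
      rwa [Real.rpow_natCast] at this
    calc t ^ ((n:ℝ)/p) * (2:ℝ)^(-t) ≤ t^n * (2:ℝ)^(-t) := by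
          apply mul_le_mul_of_nonneg_right ha (Real.rpow_nonneg (by norm_num) _)
      _ = t^n * Real.exp (-(t*Real.log 2)) := by rw [h2t]
      _ ≤ M := h2
  have hid2 : t^(-(n:ℝ)/p) * t^((n:ℝ)/p) = 1 := by
    rw [← Real.rpow_add ht0, neg_div, neg_add_cancel, Real.rpow_zero]
  calc (2:ℝ)^(-t) = t^(-(n:ℝ)/p) * (t^((n:ℝ)/p) * (2:ℝ)^(-t)) := by
        rw [← mul_assoc, hid2, one_mul]
    _ ≤ t^(-(n:ℝ)/p) * M := mul_le_mul_of_nonneg_left h3 (Real.rpow_nonneg ht0.le _)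
    _ = M * t^(-(n:ℝ)/p) := by ring

private lemma upper_aux (n : ℕ) (hn : 1 ≤ n) (p : ℝ) (hp : 1 ≤ p) (t : ℝ)
    (ht : (n:ℝ) + 1 ≤ t) :
    (∫ y in Ioi (0:ℝ), y ^ (n-1) *
        (Real.exp (-t * Real.log (1 + y ^ p)) * Real.cos (y * t) ^ 2)) ≤
      ((2:ℝ)^((n:ℝ)/p) * (1/p) * Real.Gamma ((n:ℝ)/p)
        + (2:ℝ)^((n:ℝ)+1) * ((n.factorial : ℝ) * ((Real.log 2)⁻¹)^n)) * t ^ (-(n:ℝ)/p) := by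
  have hn1 : (1:ℝ) ≤ (n:ℝ) := Nat.one_le_cast.mpr hn
  have ht1 : (1:ℝ) ≤ t := by linarith
  have ht0 : (0:ℝ) < t := by linarith
  have hp0 : (0:ℝ) < p := lt_of_lt_of_le one_pos hp
  have hint := integrableOn_aux n hn p hp t ht
  set M : ℝ := (n.factorial : ℝ) * ((Real.log 2)⁻¹)^n with hM
  set s : ℝ := (n:ℝ) + 1 with hs
  -- split
  have hsplit : (∫ y in Ioi (0:ℝ), y ^ (n-1) *
      (Real.exp (-t * Real.log (1 + y ^ p)) * Real.cos (y * t) ^ 2)) =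
      (∫ y in Ioc (0:ℝ) 1, y ^ (n-1) *
        (Real.exp (-t * Real.log (1 + y ^ p)) * Real.cos (y * t) ^ 2)) +
      (∫ y in Ioi (1:ℝ), y ^ (n-1) *
        (Real.exp (-t * Real.log (1 + y ^ p)) * Real.cos (y * t) ^ 2)) := by
    have hdisj : Disjoint (Ioc (0:ℝ) 1) (Ioi (1:ℝ)) :=
      Set.disjoint_left.mpr fun x hx hx' => (not_lt.mpr hx.2) hx'
    rw [← Ioc_union_Ioi_eq_Ioi (zero_le_one : (0:ℝ) ≤ 1)]
    exact setIntegral_union hdisj measurableSet_Ioi (hint.mono_set Ioc_subset_Ioi_self)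
      (hint.mono_set (Ioi_subset_Ioi zero_le_one))
  -- piece 1
  have hGint : IntegrableOn (fun y : ℝ => y ^ ((n:ℝ)-1) * Real.exp (-(t/2) * y ^ p))
      (Ioi 0) := integrableOn_rpow_mul_exp_neg_mul_rpow (by linarith) hp0 (by linarith)
  have hpiece1 : (∫ y in Ioc (0:ℝ) 1, y ^ (n-1) *
      (Real.exp (-t * Real.log (1 + y ^ p)) * Real.cos (y * t) ^ 2)) ≤
      (2:ℝ)^((n:ℝ)/p) * (1/p) * Real.Gamma ((n:ℝ)/p) * t ^ (-(n:ℝ)/p) := by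
    have hptw : ∀ y ∈ Ioc (0:ℝ) 1, y ^ (n-1) *
        (Real.exp (-t * Real.log (1 + y ^ p)) * Real.cos (y * t) ^ 2) ≤
        y ^ ((n:ℝ)-1) * Real.exp (-(t/2) * y ^ p) := by
      intro y hy
      have hy0 : 0 < y := hy.1
      have hpow : y ^ (n-1) = y ^ ((n:ℝ) - 1) := by
        rw [← Real.rpow_natCast y (n-1), Nat.cast_sub hn, Nat.cast_one]
      have hu0 : (0:ℝ) ≤ y ^ p := Real.rpow_nonneg hy0.le p
      have hu1 : y ^ p ≤ 1 := Real.rpow_le_one hy0.le hy.2 hp0.le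
      have hlog2 : y ^ p / 2 ≤ Real.log (1 + y ^ p) := by
        have h := Real.one_sub_inv_le_log_of_pos (show (0:ℝ) < 1 + y^p by linarith)
        have heq : 1 - (1 + y^p)⁻¹ = y^p/(1 + y^p) := by
          field_simp
          ring
        rw [heq] at h
        have hfrac : y^p/2 ≤ y^p/(1 + y^p) :=
          div_le_div_of_nonneg_left hu0 (by linarith) (by linarith)
        linarith
      have hexp : Real.exp (-t * Real.log (1 + y ^ p)) ≤ Real.exp (-(t/2) * y ^ p) := by
        apply Real.exp_le_exp.mpr
        nlinarith [mul_le_mul_of_nonneg_left hlog2 ht0.le]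
      have hb3 : Real.cos (y*t)^2 ≤ 1 := Real.cos_sq_le_one _
      have key : Real.exp (-t * Real.log (1 + y ^ p)) * Real.cos (y*t)^2 ≤
          Real.exp (-(t/2) * y ^ p) :=
        le_trans (mul_le_of_le_one_right (Real.exp_nonneg _) hb3) hexp
      rw [hpow]
      exact mul_le_mul_of_nonneg_left key (Real.rpow_nonneg hy0.le _)
    have h1 : (∫ y in Ioc (0:ℝ) 1, y ^ (n-1) *
        (Real.exp (-t * Real.log (1 + y ^ p)) * Real.cos (y * t) ^ 2)) ≤
        ∫ y in Ioc (0:ℝ) 1, y ^ ((n:ℝ)-1) * Real.exp (-(t/2) * y ^ p) :=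
      setIntegral_mono_on (hint.mono_set Ioc_subset_Ioi_self)
        (hGint.mono_set Ioc_subset_Ioi_self) measurableSet_Ioc hptw
    have h2 : (∫ y in Ioc (0:ℝ) 1, y ^ ((n:ℝ)-1) * Real.exp (-(t/2) * y ^ p)) ≤
        ∫ y in Ioi (0:ℝ), y ^ ((n:ℝ)-1) * Real.exp (-(t/2) * y ^ p) := by
      apply setIntegral_mono_set hGint _ (HasSubset.Subset.eventuallyLE Ioc_subset_Ioi_self)
      filter_upwards [ae_restrict_mem measurableSet_Ioi] with y hy
      have hy0 : (0:ℝ) < y := hy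
      positivity
    have h3 : (∫ y in Ioi (0:ℝ), y ^ ((n:ℝ)-1) * Real.exp (-(t/2) * y ^ p)) =
        (t/2) ^ (-(n:ℝ)/p) * (1/p) * Real.Gamma ((n:ℝ)/p) := by
      rw [integral_rpow_mul_exp_neg_mul_rpow hp0 (by linarith : (-1:ℝ) < (n:ℝ)-1)
        (by linarith : (0:ℝ) < t/2)]
      norm_num
    have h4 : (t/2) ^ (-(n:ℝ)/p) = (2:ℝ)^((n:ℝ)/p) * t ^ (-(n:ℝ)/p) := by
      rw [Real.div_rpow ht0.le (by norm_num : (0:ℝ) ≤ 2), div_eq_mul_inv,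
        ← Real.rpow_neg (by norm_num : (0:ℝ) ≤ 2),
        show -(-(n:ℝ)/p) = (n:ℝ)/p by ring]
      ring
    calc (∫ y in Ioc (0:ℝ) 1, y ^ (n-1) *
        (Real.exp (-t * Real.log (1 + y ^ p)) * Real.cos (y * t) ^ 2))
        ≤ ∫ y in Ioi (0:ℝ), y ^ ((n:ℝ)-1) * Real.exp (-(t/2) * y ^ p) := le_trans h1 h2
      _ = (2:ℝ)^((n:ℝ)/p) * t ^ (-(n:ℝ)/p) * (1/p) * Real.Gamma ((n:ℝ)/p) := by
          rw [h3, h4]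
      _ = (2:ℝ)^((n:ℝ)/p) * (1/p) * Real.Gamma ((n:ℝ)/p) * t ^ (-(n:ℝ)/p) := by ring
  -- piece 2
  have he : (n:ℝ) - 1 - s*p < -1 := by nlinarith
  have hpiece2 : (∫ y in Ioi (1:ℝ), y ^ (n-1) *
      (Real.exp (-t * Real.log (1 + y ^ p)) * Real.cos (y * t) ^ 2)) ≤
      (2:ℝ)^((n:ℝ)+1) * M * t ^ (-(n:ℝ)/p) := by
    have hptw : ∀ y ∈ Ioi (1:ℝ), y ^ (n-1) *
        (Real.exp (-t * Real.log (1 + y ^ p)) * Real.cos (y * t) ^ 2) ≤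
        (2:ℝ)^(s-t) * y ^ ((n:ℝ)-1-s*p) := by
      intro y hy
      have hy1 : (1:ℝ) < y := hy
      have hy0 : (0:ℝ) < y := lt_trans one_pos hy1
      have hpow : y ^ (n-1) = y ^ ((n:ℝ) - 1) := by
        rw [← Real.rpow_natCast y (n-1), Nat.cast_sub hn, Nat.cast_one]
      have hyp0 : (0:ℝ) < y ^ p := Real.rpow_pos_of_pos hy0 p
      have hyp1 : (1:ℝ) ≤ y ^ p := by
        have := Real.rpow_le_rpow (zero_le_one) hy1.le hp0.le
        rwa [Real.one_rpow] at this
      have hly : 0 ≤ Real.log y := Real.log_nonneg hy1.le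
      have hlogA : Real.log 2 ≤ Real.log (1 + y^p) :=
        Real.log_le_log two_pos (by linarith)
      have hlogB : p * Real.log y ≤ Real.log (1 + y^p) := by
        rw [← Real.log_rpow hy0]
        exact Real.log_le_log hyp0 (by linarith)
      have hexp : Real.exp (-t * Real.log (1 + y ^ p)) ≤
          (2:ℝ)^(s-t) * y ^ (-(s*p)) := by
        have h2st : (2:ℝ)^(s-t) = Real.exp (Real.log 2 * (s-t)) :=
          Real.rpow_def_of_pos two_pos _
        have hysp : y ^ (-(s*p)) = Real.exp (Real.log y * -(s*p)) :=
          Real.rpow_def_of_pos hy0 _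
        rw [h2st, hysp, ← Real.exp_add]
        apply Real.exp_le_exp.mpr
        have hts : 0 ≤ t - s := by rw [hs]; linarith
        have hs0 : (0:ℝ) ≤ s := by rw [hs]; linarith
        nlinarith [mul_le_mul_of_nonneg_left hlogA hts,
          mul_le_mul_of_nonneg_left hlogB hs0]
      have hb3 : Real.cos (y*t)^2 ≤ 1 := Real.cos_sq_le_one _
      have key : Real.exp (-t * Real.log (1 + y ^ p)) * Real.cos (y*t)^2 ≤
          (2:ℝ)^(s-t) * y ^ (-(s*p)) :=
        le_trans (mul_le_of_le_one_right (Real.exp_nonneg _) hb3) hexp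
      calc y ^ (n-1) * (Real.exp (-t * Real.log (1 + y ^ p)) * Real.cos (y * t) ^ 2)
          ≤ y ^ ((n:ℝ)-1) * ((2:ℝ)^(s-t) * y ^ (-(s*p))) := by
            rw [← hpow]
            exact mul_le_mul_of_nonneg_left key (pow_nonneg hy0.le _)
        _ = (2:ℝ)^(s-t) * (y ^ ((n:ℝ)-1) * y ^ (-(s*p))) := by ring
        _ = (2:ℝ)^(s-t) * y ^ ((n:ℝ)-1-s*p) := by
            rw [← Real.rpow_add hy0]
            ring_nf
    have hbint : IntegrableOn (fun y : ℝ => (2:ℝ)^(s-t) * y ^ ((n:ℝ)-1-s*p)) (Ioi 1) :=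
      (integrableOn_Ioi_rpow_of_lt he one_pos).const_mul _
    have h1 : (∫ y in Ioi (1:ℝ), y ^ (n-1) *
        (Real.exp (-t * Real.log (1 + y ^ p)) * Real.cos (y * t) ^ 2)) ≤
        ∫ y in Ioi (1:ℝ), (2:ℝ)^(s-t) * y ^ ((n:ℝ)-1-s*p) :=
      setIntegral_mono_on (hint.mono_set (Ioi_subset_Ioi zero_le_one)) hbint
        measurableSet_Ioi hptw
    have h2 : (∫ y in Ioi (1:ℝ), (2:ℝ)^(s-t) * y ^ ((n:ℝ)-1-s*p)) ≤ (2:ℝ)^(s-t) := by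
      rw [MeasureTheory.integral_const_mul, integral_Ioi_rpow_of_lt he one_pos,
        Real.one_rpow]
      have h2st : (0:ℝ) < (2:ℝ)^(s-t) := Real.rpow_pos_of_pos two_pos _
      have hE2 : (n:ℝ)-1-s*p+1 ≤ -1 := by nlinarith
      have hfrac : -1/((n:ℝ)-1-s*p+1) ≤ 1 := by
        rw [div_le_iff_of_neg (by linarith : (n:ℝ)-1-s*p+1 < 0)]
        linarith
      exact mul_le_of_le_one_right h2st.le hfrac
    calc (∫ y in Ioi (1:ℝ), y ^ (n-1) *
        (Real.exp (-t * Real.log (1 + y ^ p)) * Real.cos (y * t) ^ 2))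
        ≤ (2:ℝ)^(s-t) := le_trans h1 h2
      _ = (2:ℝ)^s * (2:ℝ)^(-t) := by
          rw [show s-t = s + -t by ring, Real.rpow_add two_pos]
      _ ≤ (2:ℝ)^s * (M * t^(-(n:ℝ)/p)) :=
          mul_le_mul_of_nonneg_left (twopow_aux n p hp t ht1)
            (Real.rpow_nonneg two_pos.le _)
      _ = (2:ℝ)^((n:ℝ)+1) * M * t^(-(n:ℝ)/p) := by rw [hs]; ring
  rw [hsplit]
  calc (∫ y in Ioc (0:ℝ) 1, y ^ (n-1) *
        (Real.exp (-t * Real.log (1 + y ^ p)) * Real.cos (y * t) ^ 2)) +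
      (∫ y in Ioi (1:ℝ), y ^ (n-1) *
        (Real.exp (-t * Real.log (1 + y ^ p)) * Real.cos (y * t) ^ 2))
      ≤ (2:ℝ)^((n:ℝ)/p) * (1/p) * Real.Gamma ((n:ℝ)/p) * t ^ (-(n:ℝ)/p) +
        (2:ℝ)^((n:ℝ)+1) * M * t^(-(n:ℝ)/p) := add_le_add hpiece1 hpiece2
    _ = ((2:ℝ)^((n:ℝ)/p) * (1/p) * Real.Gamma ((n:ℝ)/p)
        + (2:ℝ)^((n:ℝ)+1) * M) * t ^ (-(n:ℝ)/p) := by ring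

/-- Lemma 4.2: for `n ≥ 1` and `θ ≥ 1/2`,
`∫ (1+|ξ|^{2θ})^{-t} cos²(|ξ|t) dξ ≈ t^{-n/(2θ)}` for large `t`. -/
theorem stmt_19 (n : ℕ) (hn : 1 ≤ n) (θ : ℝ) (hθ : 1 / 2 ≤ θ) :
    ∃ C > (0 : ℝ), ∃ t₀ > (0 : ℝ), ∀ t ≥ t₀,
      C * t ^ (-(n : ℝ) / (2 * θ)) ≤
          (∫ ξ : EuclideanSpace ℝ (Fin n),
            Real.exp (-t * Real.log (1 + ‖ξ‖ ^ (2 * θ))) * Real.cos (‖ξ‖ * t) ^ 2) ∧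
        (∫ ξ : EuclideanSpace ℝ (Fin n),
            Real.exp (-t * Real.log (1 + ‖ξ‖ ^ (2 * θ))) * Real.cos (‖ξ‖ * t) ^ 2) ≤
          C⁻¹ * t ^ (-(n : ℝ) / (2 * θ)) := by
  have hn1 : (1:ℝ) ≤ (n:ℝ) := Nat.one_le_cast.mpr hn
  set p : ℝ := 2 * θ with hp'
  have hp : 1 ≤ p := by rw [hp']; linarith
  have hp0 : (0:ℝ) < p := lt_of_lt_of_le one_pos hp
  haveI : Nontrivial (EuclideanSpace ℝ (Fin n)) := by
    have : 0 < Module.finrank ℝ (EuclideanSpace ℝ (Fin n)) := by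
      rw [finrank_euclideanSpace_fin]; exact hn
    exact Module.nontrivial_of_finrank_pos this
  set V : ℝ := (volume (Metric.ball (0 : EuclideanSpace ℝ (Fin n)) 1)).toReal with hV
  have hV0 : 0 < V := by
    rw [hV]
    exact ENNReal.toReal_pos (Metric.measure_ball_pos volume 0 one_pos).ne'
      measure_ball_lt_top.ne
  set K : ℝ := (n:ℝ) * V with hK
  have hK0 : 0 < K := by positivity
  set c₁ : ℝ := 2^(n-1) * Real.exp (-(5:ℝ)^p) with hc₁
  have hc₁0 : 0 < c₁ := by positivity
  have hΓ : 0 < Real.Gamma ((n:ℝ)/p) := Real.Gamma_pos_of_pos (by positivity)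
  have hlog2 : 0 < Real.log 2 := Real.log_pos one_lt_two
  set c₂ : ℝ := (2:ℝ)^((n:ℝ)/p) * (1/p) * Real.Gamma ((n:ℝ)/p)
      + (2:ℝ)^((n:ℝ)+1) * ((n.factorial : ℝ) * ((Real.log 2)⁻¹)^n) with hc₂
  have hfac : (0:ℝ) < (n.factorial : ℝ) := Nat.cast_pos.mpr n.factorial_pos
  have hc₂0 : 0 < c₂ := by
    rw [hc₂]
    have h1 : (0:ℝ) < (2:ℝ)^((n:ℝ)/p) * (1/p) * Real.Gamma ((n:ℝ)/p) := by
      apply mul_pos (mul_pos (Real.rpow_pos_of_pos two_pos _) (by positivity)) hΓ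
    have h2 : (0:ℝ) < (2:ℝ)^((n:ℝ)+1) * ((n.factorial : ℝ) * ((Real.log 2)⁻¹)^n) := by
      apply mul_pos (Real.rpow_pos_of_pos two_pos _)
      positivity
    linarith
  refine ⟨min (K*c₁) ((K*c₂)⁻¹), by positivity, (n:ℝ) + 1, by linarith, fun t ht => ?_⟩
  have ht0 : (0:ℝ) < t := by linarith
  have htp : (0:ℝ) ≤ t ^ (-(n:ℝ)/p) := Real.rpow_nonneg ht0.le _
  have hpolar : (∫ ξ : EuclideanSpace ℝ (Fin n),
      Real.exp (-t * Real.log (1 + ‖ξ‖ ^ p)) * Real.cos (‖ξ‖ * t) ^ 2) =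
      K * ∫ y in Ioi (0:ℝ), y ^ (n-1) *
        (Real.exp (-t * Real.log (1 + y ^ p)) * Real.cos (y * t) ^ 2) := by
    have := MeasureTheory.integral_fun_norm_addHaar
      (volume : Measure (EuclideanSpace ℝ (Fin n)))
      (fun y : ℝ => Real.exp (-t * Real.log (1 + y ^ p)) * Real.cos (y * t) ^ 2)
    rw [finrank_euclideanSpace_fin] at this
    rw [this, nsmul_eq_mul, smul_eq_mul, hK, hV, measureReal_def]
    simp only [smul_eq_mul]
    ring
  rw [hpolar]
  constructor
  · calc min (K*c₁) ((K*c₂)⁻¹) * t ^ (-(n:ℝ)/p)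
        ≤ (K*c₁) * t ^ (-(n:ℝ)/p) :=
          mul_le_mul_of_nonneg_right (min_le_left _ _) htp
      _ = K * (c₁ * t ^ (-(n:ℝ)/p)) := by ring
      _ ≤ K * ∫ y in Ioi (0:ℝ), y ^ (n-1) *
            (Real.exp (-t * Real.log (1 + y ^ p)) * Real.cos (y * t) ^ 2) := by
          apply mul_le_mul_of_nonneg_left _ hK0.le
          rw [hc₁]
          exact lower_aux n hn p hp t ht
  · have hCinv : K * c₂ ≤ (min (K*c₁) ((K*c₂)⁻¹))⁻¹ := by
      have h1 : min (K*c₁) ((K*c₂)⁻¹) ≤ (K*c₂)⁻¹ := min_le_right _ _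
      have h2 : (0:ℝ) < min (K*c₁) ((K*c₂)⁻¹) := by positivity
      calc K * c₂ = ((K*c₂)⁻¹)⁻¹ := by rw [inv_inv]
        _ ≤ (min (K*c₁) ((K*c₂)⁻¹))⁻¹ := by
            apply inv_anti₀ h2 h1
    calc K * ∫ y in Ioi (0:ℝ), y ^ (n-1) *
          (Real.exp (-t * Real.log (1 + y ^ p)) * Real.cos (y * t) ^ 2)
        ≤ K * (c₂ * t ^ (-(n:ℝ)/p)) := by
          apply mul_le_mul_of_nonneg_left _ hK0.le
          rw [hc₂]
          exact upper_aux n hn p hp t ht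
      _ = (K * c₂) * t ^ (-(n:ℝ)/p) := by ring
      _ ≤ (min (K*c₁) ((K*c₂)⁻¹))⁻¹ * t ^ (-(n:ℝ)/p) :=
          mul_le_mul_of_nonneg_right hCinv htp
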